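/- In the LRPC setting with d = 2: if dim(EF) = 2r and S ⊆ EF with dim S = n−k, then the expansion S ↦ (S + f₁f₂^{-1}S) ∩ (S + f₂f₁^{-1}S) can recover EF only if 3r ≤ 2(n−k); in particular the decodable error rank is r ≤ ⌊2(n−k)/3⌋. -/
import Mathlib


open Module Submodule

/-- In the LRPC setting with `d = 2`: if `dim (EF) = 2r`,
`dim (EF + f₁f₂⁻¹ EF) = 3r`, and `S ⊆ EF` with `dim S = n - k`, then the expansion
`(S + f₁f₂⁻¹S) ∩ (S + f₂f₁⁻¹S)` can recover `EF` only if `3r ≤ 2(n-k)`. -/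
theorem stmt_16 (q m n k r : ℕ) (hq : 2 ≤ q) (hkn : k ≤ n)
    (K L : Type) [Field K] [Field L] [Algebra K L] [Fintype K] [Fintype L]
    (hcard : Fintype.card K = q) (hm : Module.finrank K L = m)
    (E F : Submodule K L) (hE : Module.finrank K ↥E = r)
    (hF : Module.finrank K ↥F = 2)
    (f₁ f₂ : L) (hf₁ : f₁ ∈ F) (hf₂ : f₂ ∈ F) (hf₁0 : f₁ ≠ 0) (hf₂0 : f₂ ≠ 0)
    (hEF : Module.finrank K ↥(E * F) = 2 * r)
    (hbig : Module.finrank K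
        ↥(E * F ⊔ Submodule.map (LinearMap.mulLeft K (f₁ * f₂⁻¹)) (E * F)) = 3 * r)
    (S : Submodule K L) (hS : S ≤ E * F)
    (hdimS : Module.finrank K ↥S = n - k)
    (hrec : (S ⊔ Submodule.map (LinearMap.mulLeft K (f₁ * f₂⁻¹)) S)
        ⊓ (S ⊔ Submodule.map (LinearMap.mulLeft K (f₂ * f₁⁻¹)) S) = E * F) :
    3 * r ≤ 2 * (n - k) := by
  set c := f₁ * f₂⁻¹ with hc
  set c' := f₂ * f₁⁻¹ with hc'
  have hcc' : c * c' = 1 := by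
    rw [hc, hc']; field_simp
  have h1 : E * F ≤ S ⊔ Submodule.map (LinearMap.mulLeft K c) S := by
    rw [← hrec]; exact inf_le_left
  have h2 : E * F ≤ S ⊔ Submodule.map (LinearMap.mulLeft K c') S := by
    rw [← hrec]; exact inf_le_right
  have hmapid : Submodule.map (LinearMap.mulLeft K c)
      (Submodule.map (LinearMap.mulLeft K c') S) = S := by
    rw [← Submodule.map_comp, ← LinearMap.mulLeft_mul, hcc', LinearMap.mulLeft_one,
      Submodule.map_id]
  have h3 : Submodule.map (LinearMap.mulLeft K c) (E * F) ≤
      S ⊔ Submodule.map (LinearMap.mulLeft K c) S := by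
    calc Submodule.map (LinearMap.mulLeft K c) (E * F)
        ≤ Submodule.map (LinearMap.mulLeft K c)
            (S ⊔ Submodule.map (LinearMap.mulLeft K c') S) := Submodule.map_mono h2
      _ = Submodule.map (LinearMap.mulLeft K c) S ⊔ S := by rw [Submodule.map_sup, hmapid]
      _ = S ⊔ Submodule.map (LinearMap.mulLeft K c) S := sup_comm _ _
  have hle : E * F ⊔ Submodule.map (LinearMap.mulLeft K c) (E * F) ≤
      S ⊔ Submodule.map (LinearMap.mulLeft K c) S := sup_le h1 h3
  have hfin : finrank K ↥(E * F ⊔ Submodule.map (LinearMap.mulLeft K c) (E * F)) ≤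
      finrank K ↥(S ⊔ Submodule.map (LinearMap.mulLeft K c) S) :=
    Submodule.finrank_mono hle
  have hsup : finrank K ↥(S ⊔ Submodule.map (LinearMap.mulLeft K c) S) ≤
      finrank K ↥S + finrank K ↥(Submodule.map (LinearMap.mulLeft K c) S) :=
    by
      have := Submodule.finrank_sup_add_finrank_inf_eq S
        (Submodule.map (LinearMap.mulLeft K c) S)
      omega
  have hmaple : finrank K ↥(Submodule.map (LinearMap.mulLeft K c) S) ≤ finrank K ↥S :=
    Submodule.finrank_map_le _ _
  have := hbig ▸ hfin
  omega
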